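/- Let X be a compact metric space and let T : X → X be a nonexpansive operator such that lim_{j→∞} Tʲ(y⁰) exists for every y⁰ ∈ X. Let μ > 0. Then there exists a positive integer k₁ such that for every x ∈ X there exists j ∈ {0,1,…,k₁} with d(Tʲ(x), Fix(T)) ≤ μ. -/
import Mathlib


/-- Let `X` be a compact metric space and `T : X → X` a nonexpansive operator whose
iterates converge pointwise. For every `μ > 0` there is a positive integer `k₁` such
that for every `x ∈ X` there is `j ∈ {0,…,k₁}` with `d(T^[j] x, Fix(T)) ≤ μ`. -/
theorem exists_iterate_near_fixed_point_set
    {X : Type*} [MetricSpace X] [CompactSpace X] (T : X → X)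
    (hT : ∀ x y : X, dist (T x) (T y) ≤ dist x y)
    (hconv : ∀ y₀ : X, ∃ z : X,
      Filter.Tendsto (fun j : ℕ => T^[j] y₀) Filter.atTop (nhds z))
    (μ : ℝ) (hμ : 0 < μ) :
    ∃ k₁ : ℕ, 0 < k₁ ∧ ∀ x : X, ∃ j ≤ k₁,
      Metric.infDist (T^[j] x) {y : X | T y = y} ≤ μ := by
  set F : Set X := {y : X | T y = y} with hF
  have hTc : Continuous T :=
    (LipschitzWith.of_dist_le_mul (K := 1) (fun x y => by simpa using hT x y)).continuous
  have key : ∀ x : X, ∃ j : ℕ, Metric.infDist (T^[j] x) F < μ := by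
    intro x
    obtain ⟨z, hz⟩ := hconv x
    have hzF : z ∈ F := by
      have h1 : Filter.Tendsto (fun j : ℕ => T^[j + 1] x) Filter.atTop (nhds z) :=
        hz.comp (Filter.tendsto_add_atTop_nat 1)
      have h2 : Filter.Tendsto (fun j : ℕ => T (T^[j] x)) Filter.atTop (nhds (T z)) :=
        (hTc.tendsto z).comp hz
      have h3 : Filter.Tendsto (fun j : ℕ => T^[j + 1] x) Filter.atTop (nhds (T z)) := by
        simpa [Function.iterate_succ_apply'] using h2
      exact tendsto_nhds_unique h3 h1
    obtain ⟨j, hj⟩ := (Metric.tendsto_nhds.mp hz μ hμ).exists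
    exact ⟨j, lt_of_le_of_lt (Metric.infDist_le_dist_of_mem hzF) hj⟩
  set U : ℕ → Set X := fun n => {x | Metric.infDist (T^[n] x) F < μ} with hU
  have hUopen : ∀ n, IsOpen (U n) := fun n =>
    isOpen_lt ((Metric.continuous_infDist_pt F).comp (hTc.iterate n)) continuous_const
  obtain ⟨s, hs⟩ := isCompact_univ.elim_finite_subcover U hUopen
    (fun x _ => Set.mem_iUnion.mpr (key x))
  refine ⟨s.sup id + 1, Nat.succ_pos _, fun x => ?_⟩
  obtain ⟨n, hns, hxn⟩ := Set.mem_iUnion₂.mp (hs (Set.mem_univ x))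
  exact ⟨n, le_trans (Finset.le_sup (f := id) hns) (Nat.le_succ _), le_of_lt hxn⟩
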